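/- Let E : Fin N × Fin D → Fin M be a (K, ε)-extractor with K an integer, 0 < K ≤ N, and let S be a set of left vertices with #S ≤ K. Then the number of elements of S that are weakly dangerous in S is at most 4εK. -/

import Mathlib

open Finset

/-- `edgeCount E S Y` is the number of edges between `S` and `Y` in the
bipartite multigraph given by `E : Fin N × Fin D → Fin M`. -/
def edgeCount {N D M : ℕ} (E : Fin N × Fin D → Fin M)
    (S : Finset (Fin N)) (Y : Finset (Fin M)) : ℕ :=
  ((S ×ˢ (univ : Finset (Fin D))).filter (fun p => E p ∈ Y)).card

/-- `E` is a `(K, ε)`-extractor: for every set `S` of at least `K` left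
vertices and every set `Y` of right vertices,
`|#E(S,Y)/(D·#S) − #Y/M| < ε`. -/
def IsExtractor {N D M : ℕ} (E : Fin N × Fin D → Fin M) (K : ℕ) (ε : ℝ) : Prop :=
  ∀ (S : Finset (Fin N)) (Y : Finset (Fin M)), K ≤ S.card →
    |(edgeCount E S Y : ℝ) / (D * S.card) - (Y.card : ℝ) / M| < ε

/-- A right vertex `z` is bad for `S` if it has more than `2DK/M` neighbors
in `S` (counted with multiplicity). -/
def BadFor {N D M : ℕ} (E : Fin N × Fin D → Fin M) (K : ℕ)
    (S : Finset (Fin N)) (z : Fin M) : Prop :=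
  (2 * D * K : ℝ) / M <
    (((S ×ˢ (univ : Finset (Fin D))).filter (fun p => E p = z)).card : ℝ)

/-- A left vertex `x` is weakly dangerous in `S` if at least half of its `D`
edge labels lead to vertices that are bad for `S`. -/
def WeaklyDangerousIn {N D M : ℕ} (E : Fin N × Fin D → Fin M) (K : ℕ)
    (S : Finset (Fin N)) (x : Fin N) : Prop :=
  (D : ℝ) / 2 ≤ ({i : Fin D | BadFor E K S (E (x, i))}.ncard : ℝ)

section Aux

lemma edgeCount_eq_sum_rows {N D M : ℕ} (E : Fin N × Fin D → Fin M)
    (S : Finset (Fin N)) (Y : Finset (Fin M)) :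
    edgeCount E S Y = ∑ x ∈ S, ((univ : Finset (Fin D)).filter (fun i => E (x, i) ∈ Y)).card := by
  unfold edgeCount
  rw [Finset.card_filter, Finset.sum_product]
  exact Finset.sum_congr rfl fun x _ => (Finset.card_filter _ _).symm

open Classical in
lemma edgeCount_eq_sum_fibers {N D M : ℕ} (E : Fin N × Fin D → Fin M)
    (S : Finset (Fin N)) (Y : Finset (Fin M)) :
    edgeCount E S Y = ∑ z ∈ Y, ((S ×ˢ (univ : Finset (Fin D))).filter (fun p => E p = z)).card := by
  unfold edgeCount
  rw [Finset.card_eq_sum_card_fiberwise (f := E) (t := Y)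
    (s := (S ×ˢ (univ : Finset (Fin D))).filter (fun p => E p ∈ Y))
    (fun p hp => (Finset.mem_filter.mp hp).2)]
  refine Finset.sum_congr rfl fun z hz => ?_
  congr 1
  rw [Finset.filter_filter]
  apply Finset.filter_congr
  intro p hp
  constructor
  · exact fun h => h.2
  · exact fun h => ⟨h ▸ hz, h⟩

lemma edgeCount_mono {N D M : ℕ} (E : Fin N × Fin D → Fin M)
    {S S' : Finset (Fin N)} (h : S ⊆ S') (Y : Finset (Fin M)) :
    edgeCount E S Y ≤ edgeCount E S' Y := by
  apply Finset.card_le_card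
  exact Finset.filter_subset_filter _ (Finset.product_subset_product_left h)

end Aux


/-- For a `(K, ε)`-extractor and a set `S` of at most `K` left vertices, the
number of elements of `S` that are weakly dangerous in `S` is at most `4εK`. -/
theorem card_weakly_dangerous_le {N D M : ℕ} (E : Fin N × Fin D → Fin M)
    (K : ℕ) (ε : ℝ) (hK : 0 < K) (hKN : K ≤ N) (hD : 0 < D) (hM : 0 < M)
    (hext : IsExtractor E K ε)
    (S : Finset (Fin N)) (hS : S.card ≤ K) :
    (({x : Fin N | x ∈ S ∧ WeaklyDangerousIn E K S x}.ncard : ℝ)) ≤ 4 * ε * K := by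
  classical
  have hDR : (0:ℝ) < D := by exact_mod_cast hD
  have hKR : (0:ℝ) < K := by exact_mod_cast hK
  have hMR : (0:ℝ) < M := by exact_mod_cast hM
  set B : Finset (Fin M) := univ.filter (fun z => BadFor E K S z) with hBdef
  set T : Finset (Fin N) := S.filter (fun x => WeaklyDangerousIn E K S x) with hTdef
  have hsetT : {x : Fin N | x ∈ S ∧ WeaklyDangerousIn E K S x} = ↑T := by
    ext x; simp [hTdef]
  rw [hsetT, Set.ncard_coe_finset]
  have huniv : K ≤ (univ : Finset (Fin N)).card := by
    simpa using hKN
  -- Step 1 : B.card / M < ε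
  obtain ⟨S', hSS', _, hS'card⟩ := Finset.exists_subsuperset_card_eq (Finset.subset_univ S) hS huniv
  have h1 : (B.card : ℝ) * ((2 * D * K : ℝ) / M) ≤ (edgeCount E S B : ℝ) := by
    rw [edgeCount_eq_sum_fibers]
    push_cast
    calc (B.card : ℝ) * ((2 * D * K : ℝ) / M)
        = ∑ _z ∈ B, ((2 * D * K : ℝ) / M) := by rw [Finset.sum_const, nsmul_eq_mul]
      _ ≤ _ := by
          apply Finset.sum_le_sum
          intro z hz
          have : BadFor E K S z := (Finset.mem_filter.mp hz).2
          exact le_of_lt this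
  have hextS : (edgeCount E S' B : ℝ) / (D * K) < (B.card : ℝ) / M + ε := by
    have := hext S' B (le_of_eq hS'card.symm)
    rw [hS'card] at this
    have := abs_lt.mp this
    linarith [this.2]
  have h2 : (edgeCount E S B : ℝ) ≤ (edgeCount E S' B : ℝ) := by
    exact_mod_cast edgeCount_mono E hSS' B
  have hBM : (B.card : ℝ) / M < ε := by
    have h3 : (B.card : ℝ) * ((2 * D * K : ℝ) / M) / (D * K) < (B.card : ℝ) / M + ε := by
      calc (B.card : ℝ) * ((2 * D * K : ℝ) / M) / (D * K)
          ≤ (edgeCount E S' B : ℝ) / (D * K) := by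
            apply div_le_div_of_nonneg_right (le_trans h1 h2) ?_ |>.trans_eq rfl
            positivity
        _ < _ := hextS
    have heq : (B.card : ℝ) * ((2 * D * K : ℝ) / M) / (D * K) = 2 * ((B.card : ℝ) / M) := by
      field_simp
    rw [heq] at h3
    linarith
  -- Step 2 : count T
  obtain ⟨T', hTT', _, hT'card⟩ := Finset.exists_subsuperset_card_eq (Finset.subset_univ T)
    (le_trans (Finset.card_le_card (Finset.filter_subset _ _)) hS) huniv
  have hrow : ∀ x ∈ T, (D : ℝ) / 2 ≤ (((univ : Finset (Fin D)).filter (fun i => E (x, i) ∈ B)).card : ℝ) := by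
    intro x hx
    have hw : WeaklyDangerousIn E K S x := (Finset.mem_filter.mp hx).2
    have hseteq : {i : Fin D | BadFor E K S (E (x, i))} =
        ↑((univ : Finset (Fin D)).filter (fun i => E (x, i) ∈ B)) := by
      ext i; simp [hBdef]
    unfold WeaklyDangerousIn at hw
    rwa [hseteq, Set.ncard_coe_finset] at hw
  have h4 : (T.card : ℝ) * ((D : ℝ) / 2) ≤ (edgeCount E T' B : ℝ) := by
    have hle : (edgeCount E T B : ℝ) ≤ (edgeCount E T' B : ℝ) := by
      exact_mod_cast edgeCount_mono E hTT' B
    refine le_trans ?_ hle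
    rw [edgeCount_eq_sum_rows]
    push_cast
    calc (T.card : ℝ) * ((D : ℝ) / 2) = ∑ _x ∈ T, ((D : ℝ) / 2) := by
          rw [Finset.sum_const, nsmul_eq_mul]
      _ ≤ _ := Finset.sum_le_sum hrow
  have hextT : (edgeCount E T' B : ℝ) / (D * K) < (B.card : ℝ) / M + ε := by
    have := hext T' B (le_of_eq hT'card.symm)
    rw [hT'card] at this
    have := abs_lt.mp this
    linarith [this.2]
  have h5 : (T.card : ℝ) * ((D : ℝ) / 2) / (D * K) < 2 * ε := by
    calc (T.card : ℝ) * ((D : ℝ) / 2) / (D * K)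
        ≤ (edgeCount E T' B : ℝ) / (D * K) := by
          apply div_le_div_of_nonneg_right h4
          positivity
      _ < (B.card : ℝ) / M + ε := hextT
      _ < 2 * ε := by linarith
  have heq2 : (T.card : ℝ) * ((D : ℝ) / 2) / (D * K) = (T.card : ℝ) / (2 * K) := by
    field_simp
  rw [heq2] at h5
  have : (T.card : ℝ) < 4 * ε * K := by
    rw [div_lt_iff₀ (by positivity)] at h5
    nlinarith
  linarith
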